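/- Let G be the Cartesian product graph ℕ □ ℕ with every edge of length 1. Then for every k ≥ 5, G is not (k, k/2)-path-chordal: for each n ≥ k, the geodesic square C_n through the vertices (1,1), (n,1), (n,n), (1,n) is a cycle with L(C_n) = 4n − 4 ≥ k all of whose shortcuts have length at least n − 1 > k/2. -/

import Mathlib

open SimpleGraph

namespace Chordality

variable {V : Type*} {G : SimpleGraph V}

/-- The length of a walk in a graph whose edge `e` has length `ℓ e`. -/
noncomputable def wlen (ℓ : Sym2 V → ℝ) {u v : V} (w : G.Walk u v) : ℝ :=
  (w.edges.map ℓ).sum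

/-- The path metric of a metric graph: the infimum of the lengths of walks joining
two vertices. -/
noncomputable def gdist (G : SimpleGraph V) (ℓ : Sym2 V → ℝ) (u v : V) : ℝ :=
  sInf {x : ℝ | ∃ w : G.Walk u v, wlen ℓ w = x}

/-- A walk is geodesic if its length realizes the path metric between its endpoints. -/
def IsGeodesicWalk (ℓ : Sym2 V → ℝ) {u v : V} (w : G.Walk u v) : Prop :=
  wlen ℓ w = gdist G ℓ u v

/-- `G`, with edge lengths `ℓ`, is a metric graph: connected, locally finite,
with positive edge lengths. -/
def IsMetricGraph (G : SimpleGraph V) (ℓ : Sym2 V → ℝ) : Prop :=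
  G.Connected ∧ (∀ e ∈ G.edgeSet, 0 < ℓ e) ∧ ∀ v : V, (G.neighborSet v).Finite

/-- A walk lies inside the closed walk `c`. -/
def WalkIn {z u v : V} (c : G.Walk z z) (w : G.Walk u v) : Prop :=
  (∀ e ∈ w.edges, e ∈ c.edges) ∧ ∀ a ∈ w.support, a ∈ c.support

/-- The length metric `d_C` of a cycle `c`, evaluated on vertices of `c`:
the infimum of lengths of walks joining `u` and `v` inside `c`. -/
noncomputable def cdist (ℓ : Sym2 V → ℝ) {z : V} (c : G.Walk z z) (u v : V) : ℝ :=
  sInf {x : ℝ | ∃ w : G.Walk u v, WalkIn c w ∧ wlen ℓ w = x}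

/-- `σ` is a shortcut of the cycle `c`: a path joining two vertices `p, q` of `c`
with `L(σ) < d_C(p, q)`. -/
def IsShortcut (ℓ : Sym2 V → ℝ) {z p q : V} (c : G.Walk z z) (σ : G.Walk p q) : Prop :=
  σ.IsPath ∧ p ∈ c.support ∧ q ∈ c.support ∧ wlen ℓ σ < cdist ℓ c p q

/-- `σ` is a strict shortcut of `c`: a shortcut meeting `c` only at its endpoints. -/
def IsStrictShortcut (ℓ : Sym2 V → ℝ) {z p q : V} (c : G.Walk z z) (σ : G.Walk p q) : Prop :=
  IsShortcut ℓ c σ ∧ ∀ a ∈ σ.support, a ∈ c.support → a = p ∨ a = q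

/-- `v` is a shortcut vertex of `c`, i.e. an endpoint of some strict shortcut of `c`. -/
def ShortcutVertex (ℓ : Sym2 V → ℝ) {z : V} (c : G.Walk z z) (v : V) : Prop :=
  ∃ (p q : V) (σ : G.Walk p q), IsStrictShortcut ℓ c σ ∧ (v = p ∨ v = q)

/-- `v` is a shortcut vertex of `c` associated to a strict shortcut of length at most `m`. -/
def ShortcutVertexLe (ℓ : Sym2 V → ℝ) {z : V} (c : G.Walk z z) (m : ℝ) (v : V) : Prop :=
  ∃ (p q : V) (σ : G.Walk p q),
    IsStrictShortcut ℓ c σ ∧ wlen ℓ σ ≤ m ∧ (v = p ∨ v = q)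

/-- `(k,m)`-edge-chordal: every cycle of length at least `k` has a shortcut consisting of
a single edge of length at most `m`. -/
def EdgeChordal (G : SimpleGraph V) (ℓ : Sym2 V → ℝ) (k m : ℝ) : Prop :=
  ∀ (z : V) (c : G.Walk z z), c.IsCycle → k ≤ wlen ℓ c →
    ∃ (p q : V) (h : G.Adj p q),
      IsShortcut ℓ c (Walk.cons h Walk.nil) ∧ ℓ s(p, q) ≤ m

/-- `k`-path-chordal: every cycle of length at least `k` admits a shortcut. -/
def PathChordal (G : SimpleGraph V) (ℓ : Sym2 V → ℝ) (k : ℝ) : Prop :=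
  ∀ (z : V) (c : G.Walk z z), c.IsCycle → k ≤ wlen ℓ c →
    ∃ (p q : V) (σ : G.Walk p q), IsShortcut ℓ c σ

/-- `(k,m)`-path-chordal: every cycle of length at least `k` admits a shortcut of length
at most `m`. -/
def PathChordalLe (G : SimpleGraph V) (ℓ : Sym2 V → ℝ) (k m : ℝ) : Prop :=
  ∀ (z : V) (c : G.Walk z z), c.IsCycle → k ≤ wlen ℓ c →
    ∃ (p q : V) (σ : G.Walk p q), IsShortcut ℓ c σ ∧ wlen ℓ σ ≤ m

/-- `ε`-densely `(k,m)`-path-chordal: on every cycle of length at least `k`, the vertices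
that are shortcut vertices of strict shortcuts of length at most `m` form an `ε`-dense
subset of `(C, d_C)`. -/
def DenselyPathChordal (G : SimpleGraph V) (ℓ : Sym2 V → ℝ) (ε k m : ℝ) : Prop :=
  ∀ (z : V) (c : G.Walk z z), c.IsCycle → k ≤ wlen ℓ c →
    ∀ x ∈ c.support, ∃ v, ShortcutVertexLe ℓ c m v ∧ cdist ℓ c v x < ε

/-- `ε`-densely `k`-path-chordal: on every cycle of length at least `k`, the shortcut
vertices (of strict shortcuts, with no bound on their lengths) form an `ε`-dense subset
of `(C, d_C)`. -/
def DenselyKPathChordal (G : SimpleGraph V) (ℓ : Sym2 V → ℝ) (ε k : ℝ) : Prop :=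
  ∀ (z : V) (c : G.Walk z z), c.IsCycle → k ≤ wlen ℓ c →
    ∀ x ∈ c.support, ∃ v, ShortcutVertex ℓ c v ∧ cdist ℓ c v x < ε

/-- The geodesic triangle with sides `g1, g2, g3` is `δ`-thin: each side is contained in
the `δ`-neighborhood of the union of the other two sides. -/
def ThinTriangle (ℓ : Sym2 V → ℝ) (δ : ℝ) {x y z : V}
    (g1 : G.Walk x y) (g2 : G.Walk y z) (g3 : G.Walk z x) : Prop :=
  (∀ p ∈ g1.support, ∃ q, (q ∈ g2.support ∨ q ∈ g3.support) ∧ gdist G ℓ p q ≤ δ) ∧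
  (∀ p ∈ g2.support, ∃ q, (q ∈ g3.support ∨ q ∈ g1.support) ∧ gdist G ℓ p q ≤ δ) ∧
  (∀ p ∈ g3.support, ∃ q, (q ∈ g1.support ∨ q ∈ g2.support) ∧ gdist G ℓ p q ≤ δ)

/-- `G` is `δ`-hyperbolic: every geodesic triangle is `δ`-thin. -/
def Hyperbolic (G : SimpleGraph V) (ℓ : Sym2 V → ℝ) (δ : ℝ) : Prop :=
  ∀ (x y z : V) (g1 : G.Walk x y) (g2 : G.Walk y z) (g3 : G.Walk z x),
    IsGeodesicWalk ℓ g1 → IsGeodesicWalk ℓ g2 → IsGeodesicWalk ℓ g3 →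
    ThinTriangle ℓ δ g1 g2 g3

/-- The sharp hyperbolicity constant `δ(G)`. -/
noncomputable def hypConst (G : SimpleGraph V) (ℓ : Sym2 V → ℝ) : ℝ :=
  sInf {δ : ℝ | 0 ≤ δ ∧ Hyperbolic G ℓ δ}

/-- A walk lies inside the geodesic triangle with sides `g1, g2, g3`. -/
def WalkInTri {x y z u v : V} (g1 : G.Walk x y) (g2 : G.Walk y z) (g3 : G.Walk z x)
    (w : G.Walk u v) : Prop :=
  (∀ e ∈ w.edges, e ∈ g1.edges ∨ e ∈ g2.edges ∨ e ∈ g3.edges) ∧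
  ∀ a ∈ w.support, a ∈ g1.support ∨ a ∈ g2.support ∨ a ∈ g3.support

/-- The length metric `d_T` of the geodesic triangle with sides `g1, g2, g3`,
evaluated on vertices of the triangle. -/
noncomputable def tdist (ℓ : Sym2 V → ℝ) {x y z : V} (g1 : G.Walk x y) (g2 : G.Walk y z)
    (g3 : G.Walk z x) (u v : V) : ℝ :=
  sInf {r : ℝ | ∃ w : G.Walk u v, WalkInTri g1 g2 g3 w ∧ wlen ℓ w = r}

/-- `σ` is a shortcut of the geodesic triangle with sides `g1, g2, g3`: a path joining
two vertices `p, q` of the triangle with `L(σ) < d_T(p, q)`. -/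
def IsTriShortcut (ℓ : Sym2 V → ℝ) {x y z p q : V} (g1 : G.Walk x y) (g2 : G.Walk y z)
    (g3 : G.Walk z x) (σ : G.Walk p q) : Prop :=
  σ.IsPath ∧ (p ∈ g1.support ∨ p ∈ g2.support ∨ p ∈ g3.support) ∧
    (q ∈ g1.support ∨ q ∈ g2.support ∨ q ∈ g3.support) ∧
    wlen ℓ σ < tdist ℓ g1 g2 g3 p q

/-- `v` is a shortcut vertex of the triangle, associated to a shortcut of length
at most `m`. -/
def TriShortcutVertexLe (ℓ : Sym2 V → ℝ) {x y z : V} (g1 : G.Walk x y) (g2 : G.Walk y z)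
    (g3 : G.Walk z x) (m : ℝ) (v : V) : Prop :=
  ∃ (p q : V) (σ : G.Walk p q),
    IsTriShortcut ℓ g1 g2 g3 σ ∧ wlen ℓ σ ≤ m ∧ (v = p ∨ v = q)

/-- `ε`-densely `(k,m)`-path-chordal on the triangles: for every geodesic triangle of
total length at least `k`, the shortcut vertices of shortcuts of length at most `m`
form an `ε`-dense subset of `(T, d_T)`. -/
def DenselyPathChordalOnTriangles (G : SimpleGraph V) (ℓ : Sym2 V → ℝ) (ε k m : ℝ) : Prop :=
  ∀ (x y z : V) (g1 : G.Walk x y) (g2 : G.Walk y z) (g3 : G.Walk z x),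
    IsGeodesicWalk ℓ g1 → IsGeodesicWalk ℓ g2 → IsGeodesicWalk ℓ g3 →
    k ≤ wlen ℓ g1 + wlen ℓ g2 + wlen ℓ g3 →
    ∀ p, (p ∈ g1.support ∨ p ∈ g2.support ∨ p ∈ g3.support) →
      ∃ v, TriShortcutVertexLe ℓ g1 g2 g3 m v ∧ tdist ℓ g1 g2 g3 v p < ε

end Chordality

namespace Chordality

/-- The graph `ℕ`, where `n` and `n + 1` are adjacent. -/
def nline : SimpleGraph ℕ := SimpleGraph.fromRel fun a b => b = a + 1

/-- The Cartesian product graph `ℕ □ ℕ`. -/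
def GNN : SimpleGraph (ℕ × ℕ) := nline.boxProd nline

lemma nline_adj {a b : ℕ} : nline.Adj a b ↔ a ≠ b ∧ (b = a + 1 ∨ a = b + 1) := by
  simp [nline, SimpleGraph.fromRel_adj]

lemma gnn_adj {p q : ℕ × ℕ} : GNN.Adj p q ↔
    (p.1 = q.1 ∧ nline.Adj p.2 q.2) ∨ (nline.Adj p.1 q.1 ∧ p.2 = q.2) := by
  rw [GNN, SimpleGraph.boxProd_adj]; tauto

lemma adjE {x y : ℕ} : GNN.Adj (x, y) (x + 1, y) := by
  rw [gnn_adj]; right; exact ⟨nline_adj.2 ⟨by omega, Or.inl rfl⟩, rfl⟩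

lemma adjN {x y : ℕ} : GNN.Adj (x, y) (x, y + 1) := by
  rw [gnn_adj]; left; exact ⟨rfl, nline_adj.2 ⟨by omega, Or.inl rfl⟩⟩

def east (y a : ℕ) : (d : ℕ) → GNN.Walk (a, y) (a + d, y)
  | 0 => .nil
  | d + 1 => (east y a d).concat adjE

def north (x a : ℕ) : (d : ℕ) → GNN.Walk (x, a) (x, a + d)
  | 0 => .nil
  | d + 1 => (north x a d).concat adjN

@[simp] lemma east_length (y a d : ℕ) : (east y a d).length = d := by
  induction d with
  | zero => rfl
  | succ d ih => simp [east, Walk.length_concat, ih]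

@[simp] lemma north_length (x a d : ℕ) : (north x a d).length = d := by
  induction d with
  | zero => rfl
  | succ d ih => simp [north, Walk.length_concat, ih]

lemma east_support (y a d : ℕ) :
    (east y a d).support = (List.range (d + 1)).map fun i => (a + i, y) := by
  induction d with
  | zero => rfl
  | succ d ih =>
    rw [east, Walk.support_concat, ih, List.range_succ (n := d + 1)]
    simp

lemma north_support (x a d : ℕ) :
    (north x a d).support = (List.range (d + 1)).map fun i => (x, a + i) := by
  induction d with
  | zero => rfl
  | succ d ih =>
    rw [north, Walk.support_concat, ih, List.range_succ (n := d + 1)]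
    simp

lemma east_edges (y a d : ℕ) :
    (east y a d).edges = (List.range d).map fun i => s((a + i, y), (a + i + 1, y)) := by
  induction d with
  | zero => rfl
  | succ d ih =>
    rw [east, Walk.edges_concat, ih, List.range_succ (n := d)]
    simp [Nat.add_assoc]

lemma north_edges (x a d : ℕ) :
    (north x a d).edges = (List.range d).map fun i => s((x, a + i), (x, a + i + 1)) := by
  induction d with
  | zero => rfl
  | succ d ih =>
    rw [north, Walk.edges_concat, ih, List.range_succ (n := d)]
    simp [Nat.add_assoc]


def sq (m : ℕ) : GNN.Walk (1, 1) (1, 1) :=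
  (((east 1 1 m).append (north (1 + m) 1 m)).append (east (1 + m) 1 m).reverse).append
    (north 1 1 m).reverse

lemma sq_length (m : ℕ) : (sq m).length = 4 * m := by
  simp [sq, Walk.length_append, Walk.length_reverse]; omega

lemma sq_support (m : ℕ) : (sq m).support =
    ((List.range (m + 1)).map fun i => ((1 + i, 1) : ℕ × ℕ)) ++
    ((List.range m).map fun i => ((1 + m, 1 + (i + 1)) : ℕ × ℕ)) ++
    (((List.range m).map fun i => ((1 + i, 1 + m) : ℕ × ℕ)).reverse) ++
    (((List.range m).map fun i => ((1, 1 + i) : ℕ × ℕ)).reverse) := by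
  rw [sq, Walk.support_append, Walk.support_append, Walk.support_append]
  rw [east_support, north_support, Walk.support_reverse, Walk.support_reverse,
    east_support, north_support]
  congr 1
  · congr 1
    · congr 1
      · rw [List.range_succ_eq_map]; simp [Function.comp, Nat.add_comm, Nat.add_assoc, Nat.add_left_comm]
    · rw [List.range_succ (n := m)]; simp
  · rw [List.range_succ (n := m)]; simp


lemma mem_sq_support {m : ℕ} (hm : 1 ≤ m) {v : ℕ × ℕ} :
    v ∈ (sq m).support ↔
      (v.1 = 1 ∨ v.1 = 1 + m ∨ v.2 = 1 ∨ v.2 = 1 + m) ∧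
        1 ≤ v.1 ∧ v.1 ≤ 1 + m ∧ 1 ≤ v.2 ∧ v.2 ≤ 1 + m := by
  obtain ⟨x, y⟩ := v
  rw [sq_support]
  simp only [List.mem_append, List.mem_reverse, List.mem_map, List.mem_range, Prod.mk.injEq]
  constructor
  · rintro (((⟨i, hi, hx, hy⟩ | ⟨i, hi, hx, hy⟩) | ⟨i, hi, hx, hy⟩) | ⟨i, hi, hx, hy⟩) <;> omega
  · rintro ⟨h1, h2, h3, h4, h5⟩
    rcases h1 with h | h | h | h
    · rcases le_or_gt y m with h' | h'
      · exact Or.inr ⟨y - 1, by omega⟩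
      · exact Or.inl (Or.inr ⟨0, by omega⟩)
    · rcases le_or_gt 2 y with h' | h'
      · exact Or.inl (Or.inl (Or.inr ⟨y - 2, by omega⟩))
      · exact Or.inl (Or.inl (Or.inl ⟨m, by omega⟩))
    · exact Or.inl (Or.inl (Or.inl ⟨x - 1, by omega⟩))
    · rcases le_or_gt x m with h' | h'
      · exact Or.inl (Or.inr ⟨x - 1, by omega⟩)
      · exact Or.inl (Or.inl (Or.inr ⟨m - 1, by omega⟩))

lemma sq_edges (m : ℕ) : (sq m).edges =
    ((List.range m).map fun i => s(((1 + i, 1) : ℕ × ℕ), (1 + i + 1, 1))) ++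
    ((List.range m).map fun i => s(((1 + m, 1 + i) : ℕ × ℕ), (1 + m, 1 + i + 1))) ++
    (((List.range m).map fun i => s(((1 + i, 1 + m) : ℕ × ℕ), (1 + i + 1, 1 + m))).reverse.map
      id) ++
    (((List.range m).map fun i => s(((1, 1 + i) : ℕ × ℕ), (1, 1 + i + 1))).reverse.map id) := by
  rw [sq, Walk.edges_append, Walk.edges_append, Walk.edges_append, Walk.edges_reverse,
    Walk.edges_reverse, east_edges, north_edges, east_edges, north_edges]
  simp

lemma sq_isCycle {m : ℕ} (hm : 1 ≤ m) : (sq m).IsCycle := by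
  constructor
  · constructor
    · constructor
      rw [sq_edges]
      simp only [List.map_id]
      refine List.Nodup.append (List.Nodup.append (List.Nodup.append ?_ ?_ ?_) ?_ ?_) ?_ ?_
      · refine (List.nodup_range).map ?_
        intro a b h; rw [Sym2.eq_iff] at h
        rcases h with ⟨h1, h2⟩ | ⟨h1, h2⟩ <;> simp only [Prod.mk.injEq] at h1 h2 <;> omega
      · refine (List.nodup_range).map ?_
        intro a b h; rw [Sym2.eq_iff] at h
        rcases h with ⟨h1, h2⟩ | ⟨h1, h2⟩ <;> simp only [Prod.mk.injEq] at h1 h2 <;> omega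
      · intro e he he'
        simp only [List.mem_map, List.mem_range] at he he'
        obtain ⟨i, hi, rfl⟩ := he
        obtain ⟨j, hj, hj'⟩ := he'
        rw [Sym2.eq_iff] at hj'
        rcases hj' with ⟨h1, h2⟩ | ⟨h1, h2⟩ <;> simp only [Prod.mk.injEq] at h1 h2 <;> omega
      · refine List.nodup_reverse.2 ((List.nodup_range).map ?_)
        intro a b h; rw [Sym2.eq_iff] at h
        rcases h with ⟨h1, h2⟩ | ⟨h1, h2⟩ <;> simp only [Prod.mk.injEq] at h1 h2 <;> omega
      · intro e he he'
        simp only [List.mem_append, List.mem_reverse, List.mem_map, List.mem_range] at he he'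
        obtain ⟨j, hj, hj'⟩ := he'
        rcases he with ⟨i, hi, rfl⟩ | ⟨i, hi, rfl⟩ <;>
        · rw [Sym2.eq_iff] at hj'
          rcases hj' with ⟨h1, h2⟩ | ⟨h1, h2⟩ <;> simp only [Prod.mk.injEq] at h1 h2 <;> omega
      · refine List.nodup_reverse.2 ((List.nodup_range).map ?_)
        intro a b h; rw [Sym2.eq_iff] at h
        rcases h with ⟨h1, h2⟩ | ⟨h1, h2⟩ <;> simp only [Prod.mk.injEq] at h1 h2 <;> omega
      · intro e he he'
        simp only [List.mem_append, List.mem_reverse, List.mem_map, List.mem_range] at he he'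
        obtain ⟨j, hj, hj'⟩ := he'
        rcases he with (⟨i, hi, rfl⟩ | ⟨i, hi, rfl⟩) | ⟨i, hi, rfl⟩ <;>
        · rw [Sym2.eq_iff] at hj'
          rcases hj' with ⟨h1, h2⟩ | ⟨h1, h2⟩ <;> simp only [Prod.mk.injEq] at h1 h2 <;> omega
    · intro h
      have h2 := congrArg Walk.length h
      rw [sq_length] at h2
      simp at h2
      omega
  · have hs : (sq m).support.tail =
        ((List.range m).map fun i => ((1 + (i + 1), 1) : ℕ × ℕ)) ++
        ((List.range m).map fun i => ((1 + m, 1 + (i + 1)) : ℕ × ℕ)) ++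
        (((List.range m).map fun i => ((1 + i, 1 + m) : ℕ × ℕ)).reverse) ++
        (((List.range m).map fun i => ((1, 1 + i) : ℕ × ℕ)).reverse) := by
      rw [sq_support]
      rw [List.range_succ_eq_map]
      simp [Function.comp, List.tail_append_of_ne_nil]
    rw [hs]
    refine List.Nodup.append (List.Nodup.append (List.Nodup.append ?_ ?_ ?_) ?_ ?_) ?_ ?_
    · refine (List.nodup_range).map ?_
      intro a b h; simp only [Prod.mk.injEq] at h; omega
    · refine (List.nodup_range).map ?_
      intro a b h; simp only [Prod.mk.injEq] at h; omega
    · intro e he he'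
      simp only [List.mem_map, List.mem_range] at he he'
      obtain ⟨i, hi, rfl⟩ := he
      obtain ⟨j, hj, hj'⟩ := he'
      simp only [Prod.mk.injEq] at hj'; omega
    · refine List.nodup_reverse.2 ((List.nodup_range).map ?_)
      intro a b h; simp only [Prod.mk.injEq] at h; omega
    · intro e he he'
      simp only [List.mem_append, List.mem_reverse, List.mem_map, List.mem_range] at he he'
      obtain ⟨j, hj, hj'⟩ := he'
      rcases he with ⟨i, hi, rfl⟩ | ⟨i, hi, rfl⟩ <;>
        simp only [Prod.mk.injEq] at hj' <;> omega
    · refine List.nodup_reverse.2 ((List.nodup_range).map ?_)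
      intro a b h; simp only [Prod.mk.injEq] at h; omega
    · intro e he he'
      simp only [List.mem_append, List.mem_reverse, List.mem_map, List.mem_range] at he he'
      obtain ⟨j, hj, hj'⟩ := he'
      rcases he with (⟨i, hi, rfl⟩ | ⟨i, hi, rfl⟩) | ⟨i, hi, rfl⟩ <;>
        simp only [Prod.mk.injEq] at hj' <;> omega


lemma walkIn_append {z u v x : ℕ × ℕ} {c : GNN.Walk z z} {w1 : GNN.Walk u v}
    {w2 : GNN.Walk v x} (h1 : WalkIn c w1) (h2 : WalkIn c w2) : WalkIn c (w1.append w2) := by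
  constructor
  · intro e he
    rw [Walk.edges_append, List.mem_append] at he
    rcases he with he | he
    exacts [h1.1 e he, h2.1 e he]
  · intro a ha
    rw [Walk.mem_support_append_iff] at ha
    rcases ha with ha | ha
    exacts [h1.2 a ha, h2.2 a ha]

lemma walkIn_reverse {z u v : ℕ × ℕ} {c : GNN.Walk z z} {w : GNN.Walk u v}
    (h : WalkIn c w) : WalkIn c w.reverse := by
  refine ⟨fun e he => h.1 e ?_, fun a ha => h.2 a ?_⟩
  · rwa [Walk.edges_reverse, List.mem_reverse] at he
  · rwa [Walk.support_reverse, List.mem_reverse] at ha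

lemma walkIn_copy {z u v u' v' : ℕ × ℕ} {c : GNN.Walk z z} {w : GNN.Walk u v}
    (hu : u = u') (hv : v = v') (h : WalkIn c w) : WalkIn c (w.copy hu hv) := by
  simpa [WalkIn, Walk.edges_copy, Walk.support_copy] using h

lemma walkIn_east_bottom {m a d : ℕ} (hm : 1 ≤ m) (ha : 1 ≤ a) (had : a + d ≤ 1 + m) :
    WalkIn (sq m) (east 1 a d) := by
  constructor
  · intro e he
    rw [east_edges] at he
    simp only [List.mem_map, List.mem_range] at he
    obtain ⟨i, hi, rfl⟩ := he
    rw [sq_edges]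
    simp only [List.map_id, List.mem_append, List.mem_reverse, List.mem_map, List.mem_range]
    exact Or.inl (Or.inl (Or.inl ⟨a + i - 1, by omega,
      by rw [show 1 + (a + i - 1) = a + i from by omega]⟩))
  · intro v hv
    rw [east_support] at hv
    simp only [List.mem_map, List.mem_range] at hv
    obtain ⟨i, hi, rfl⟩ := hv
    rw [mem_sq_support hm]
    refine ⟨by omega, by omega, by omega, by omega, by omega⟩

lemma walkIn_east_top {m a d : ℕ} (hm : 1 ≤ m) (ha : 1 ≤ a) (had : a + d ≤ 1 + m) :
    WalkIn (sq m) (east (1 + m) a d) := by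
  constructor
  · intro e he
    rw [east_edges] at he
    simp only [List.mem_map, List.mem_range] at he
    obtain ⟨i, hi, rfl⟩ := he
    rw [sq_edges]
    simp only [List.map_id, List.mem_append, List.mem_reverse, List.mem_map, List.mem_range]
    exact Or.inl (Or.inr ⟨a + i - 1, by omega,
      by rw [show 1 + (a + i - 1) = a + i from by omega]⟩)
  · intro v hv
    rw [east_support] at hv
    simp only [List.mem_map, List.mem_range] at hv
    obtain ⟨i, hi, rfl⟩ := hv
    rw [mem_sq_support hm]
    refine ⟨by omega, by omega, by omega, by omega, by omega⟩

lemma walkIn_north_left {m a d : ℕ} (hm : 1 ≤ m) (ha : 1 ≤ a) (had : a + d ≤ 1 + m) :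
    WalkIn (sq m) (north 1 a d) := by
  constructor
  · intro e he
    rw [north_edges] at he
    simp only [List.mem_map, List.mem_range] at he
    obtain ⟨i, hi, rfl⟩ := he
    rw [sq_edges]
    simp only [List.map_id, List.mem_append, List.mem_reverse, List.mem_map, List.mem_range]
    exact Or.inr ⟨a + i - 1, by omega,
      by rw [show 1 + (a + i - 1) = a + i from by omega]⟩
  · intro v hv
    rw [north_support] at hv
    simp only [List.mem_map, List.mem_range] at hv
    obtain ⟨i, hi, rfl⟩ := hv
    rw [mem_sq_support hm]
    refine ⟨by omega, by omega, by omega, by omega, by omega⟩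

lemma walkIn_north_right {m a d : ℕ} (hm : 1 ≤ m) (ha : 1 ≤ a) (had : a + d ≤ 1 + m) :
    WalkIn (sq m) (north (1 + m) a d) := by
  constructor
  · intro e he
    rw [north_edges] at he
    simp only [List.mem_map, List.mem_range] at he
    obtain ⟨i, hi, rfl⟩ := he
    rw [sq_edges]
    simp only [List.map_id, List.mem_append, List.mem_reverse, List.mem_map, List.mem_range]
    exact Or.inl (Or.inl (Or.inr ⟨a + i - 1, by omega,
      by rw [show 1 + (a + i - 1) = a + i from by omega]⟩))
  · intro v hv
    rw [north_support] at hv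
    simp only [List.mem_map, List.mem_range] at hv
    obtain ⟨i, hi, rfl⟩ := hv
    rw [mem_sq_support hm]
    refine ⟨by omega, by omega, by omega, by omega, by omega⟩


lemma exists_side_bottom {m : ℕ} (hm : 1 ≤ m) (a b : ℕ) (ha : 1 ≤ a) (hb : 1 ≤ b)
    (ha' : a ≤ 1 + m) (hb' : b ≤ 1 + m) :
    ∃ w : GNN.Walk ((a, 1) : ℕ × ℕ) ((b, 1) : ℕ × ℕ), WalkIn (sq m) w ∧ w.length = (a - b) + (b - a) := by
  rcases le_total a b with h | h
  · refine ⟨(east 1 a (b - a)).copy rfl (by rw [show a + (b - a) = b from by omega]),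
      walkIn_copy _ _ (walkIn_east_bottom hm ha (by omega)), ?_⟩
    simp only [Walk.length_copy, east_length]
    omega
  · refine ⟨((east 1 b (a - b)).copy rfl (by rw [show b + (a - b) = a from by omega])).reverse,
      walkIn_reverse (walkIn_copy _ _ (walkIn_east_bottom hm hb (by omega))), ?_⟩
    simp only [Walk.length_reverse, Walk.length_copy, east_length]
    omega

lemma exists_side_top {m : ℕ} (hm : 1 ≤ m) (a b : ℕ) (ha : 1 ≤ a) (hb : 1 ≤ b)
    (ha' : a ≤ 1 + m) (hb' : b ≤ 1 + m) :
    ∃ w : GNN.Walk ((a, 1 + m) : ℕ × ℕ) ((b, 1 + m) : ℕ × ℕ), WalkIn (sq m) w ∧ w.length = (a - b) + (b - a) := by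
  rcases le_total a b with h | h
  · refine ⟨(east (1 + m) a (b - a)).copy rfl (by rw [show a + (b - a) = b from by omega]),
      walkIn_copy _ _ (walkIn_east_top hm ha (by omega)), ?_⟩
    simp only [Walk.length_copy, east_length]
    omega
  · refine ⟨((east (1 + m) b (a - b)).copy rfl (by rw [show b + (a - b) = a from by omega])).reverse,
      walkIn_reverse (walkIn_copy _ _ (walkIn_east_top hm hb (by omega))), ?_⟩
    simp only [Walk.length_reverse, Walk.length_copy, east_length]
    omega

lemma exists_side_left {m : ℕ} (hm : 1 ≤ m) (a b : ℕ) (ha : 1 ≤ a) (hb : 1 ≤ b)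
    (ha' : a ≤ 1 + m) (hb' : b ≤ 1 + m) :
    ∃ w : GNN.Walk ((1, a) : ℕ × ℕ) ((1, b) : ℕ × ℕ), WalkIn (sq m) w ∧ w.length = (a - b) + (b - a) := by
  rcases le_total a b with h | h
  · refine ⟨(north 1 a (b - a)).copy rfl (by rw [show a + (b - a) = b from by omega]),
      walkIn_copy _ _ (walkIn_north_left hm ha (by omega)), ?_⟩
    simp only [Walk.length_copy, north_length]
    omega
  · refine ⟨((north 1 b (a - b)).copy rfl (by rw [show b + (a - b) = a from by omega])).reverse,
      walkIn_reverse (walkIn_copy _ _ (walkIn_north_left hm hb (by omega))), ?_⟩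
    simp only [Walk.length_reverse, Walk.length_copy, north_length]
    omega

lemma exists_side_right {m : ℕ} (hm : 1 ≤ m) (a b : ℕ) (ha : 1 ≤ a) (hb : 1 ≤ b)
    (ha' : a ≤ 1 + m) (hb' : b ≤ 1 + m) :
    ∃ w : GNN.Walk ((1 + m, a) : ℕ × ℕ) ((1 + m, b) : ℕ × ℕ), WalkIn (sq m) w ∧ w.length = (a - b) + (b - a) := by
  rcases le_total a b with h | h
  · refine ⟨(north (1 + m) a (b - a)).copy rfl (by rw [show a + (b - a) = b from by omega]),
      walkIn_copy _ _ (walkIn_north_right hm ha (by omega)), ?_⟩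
    simp only [Walk.length_copy, north_length]
    omega
  · refine ⟨((north (1 + m) b (a - b)).copy rfl (by rw [show b + (a - b) = a from by omega])).reverse,
      walkIn_reverse (walkIn_copy _ _ (walkIn_north_right hm hb (by omega))), ?_⟩
    simp only [Walk.length_reverse, Walk.length_copy, north_length]
    omega


lemma reach {m : ℕ} (hm : 1 ≤ m) (p q : ℕ × ℕ)
    (hp : p ∈ (sq m).support) (hq : q ∈ (sq m).support)
    (hdx : p.1 - q.1 + (q.1 - p.1) < m) (hdy : p.2 - q.2 + (q.2 - p.2) < m) :
    ∃ w : GNN.Walk p q, WalkIn (sq m) w ∧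
      w.length = (p.1 - q.1) + (q.1 - p.1) + ((p.2 - q.2) + (q.2 - p.2)) := by
  obtain ⟨px, py⟩ := p
  obtain ⟨qx, qy⟩ := q
  rw [mem_sq_support hm] at hp hq
  obtain ⟨hp1, hp2, hp3, hp4, hp5⟩ := hp
  obtain ⟨hq1, hq2, hq3, hq4, hq5⟩ := hq
  simp only at hp1 hp2 hp3 hp4 hp5 hq1 hq2 hq3 hq4 hq5 hdx hdy ⊢
  rcases hp1 with rfl | rfl | rfl | rfl <;> rcases hq1 with rfl | rfl | rfl | rfl
  · obtain ⟨w1, hw1, hl1⟩ := exists_side_left hm py qy (by omega) (by omega) (by omega) (by omega)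
    exact ⟨w1, hw1, by omega⟩
  · omega
  · obtain ⟨w1, hw1, hl1⟩ := exists_side_left hm py 1 (by omega) (by omega) (by omega) (by omega)
    obtain ⟨w2, hw2, hl2⟩ := exists_side_bottom hm 1 qx (by omega) (by omega) (by omega) (by omega)
    exact ⟨w1.append w2, walkIn_append hw1 hw2, by rw [Walk.length_append]; omega⟩
  · obtain ⟨w1, hw1, hl1⟩ := exists_side_left hm py (1 + m) (by omega) (by omega) (by omega) (by omega)
    obtain ⟨w2, hw2, hl2⟩ := exists_side_top hm 1 qx (by omega) (by omega) (by omega) (by omega)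
    exact ⟨w1.append w2, walkIn_append hw1 hw2, by rw [Walk.length_append]; omega⟩
  · omega
  · obtain ⟨w1, hw1, hl1⟩ := exists_side_right hm py qy (by omega) (by omega) (by omega) (by omega)
    exact ⟨w1, hw1, by omega⟩
  · obtain ⟨w1, hw1, hl1⟩ := exists_side_right hm py 1 (by omega) (by omega) (by omega) (by omega)
    obtain ⟨w2, hw2, hl2⟩ := exists_side_bottom hm (1 + m) qx (by omega) (by omega) (by omega) (by omega)
    exact ⟨w1.append w2, walkIn_append hw1 hw2, by rw [Walk.length_append]; omega⟩
  · obtain ⟨w1, hw1, hl1⟩ := exists_side_right hm py (1 + m) (by omega) (by omega) (by omega) (by omega)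
    obtain ⟨w2, hw2, hl2⟩ := exists_side_top hm (1 + m) qx (by omega) (by omega) (by omega) (by omega)
    exact ⟨w1.append w2, walkIn_append hw1 hw2, by rw [Walk.length_append]; omega⟩
  · obtain ⟨w1, hw1, hl1⟩ := exists_side_bottom hm px 1 (by omega) (by omega) (by omega) (by omega)
    obtain ⟨w2, hw2, hl2⟩ := exists_side_left hm 1 qy (by omega) (by omega) (by omega) (by omega)
    exact ⟨w1.append w2, walkIn_append hw1 hw2, by rw [Walk.length_append]; omega⟩
  · obtain ⟨w1, hw1, hl1⟩ := exists_side_bottom hm px (1 + m) (by omega) (by omega) (by omega) (by omega)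
    obtain ⟨w2, hw2, hl2⟩ := exists_side_right hm 1 qy (by omega) (by omega) (by omega) (by omega)
    exact ⟨w1.append w2, walkIn_append hw1 hw2, by rw [Walk.length_append]; omega⟩
  · obtain ⟨w1, hw1, hl1⟩ := exists_side_bottom hm px qx (by omega) (by omega) (by omega) (by omega)
    exact ⟨w1, hw1, by omega⟩
  · omega
  · obtain ⟨w1, hw1, hl1⟩ := exists_side_top hm px 1 (by omega) (by omega) (by omega) (by omega)
    obtain ⟨w2, hw2, hl2⟩ := exists_side_left hm (1 + m) qy (by omega) (by omega) (by omega) (by omega)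
    exact ⟨w1.append w2, walkIn_append hw1 hw2, by rw [Walk.length_append]; omega⟩
  · obtain ⟨w1, hw1, hl1⟩ := exists_side_top hm px (1 + m) (by omega) (by omega) (by omega) (by omega)
    obtain ⟨w2, hw2, hl2⟩ := exists_side_right hm (1 + m) qy (by omega) (by omega) (by omega) (by omega)
    exact ⟨w1.append w2, walkIn_append hw1 hw2, by rw [Walk.length_append]; omega⟩
  · omega
  · obtain ⟨w1, hw1, hl1⟩ := exists_side_top hm px qx (by omega) (by omega) (by omega) (by omega)
    exact ⟨w1, hw1, by omega⟩


lemma wlen_one {u v : ℕ × ℕ} (w : GNN.Walk u v) :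
    wlen (fun _ => (1 : ℝ)) w = w.length := by
  simp [wlen]

lemma cdist_le {z p q : ℕ × ℕ} {c : GNN.Walk z z} (w : GNN.Walk p q) (hw : WalkIn c w) :
    cdist (fun _ => (1 : ℝ)) c p q ≤ w.length := by
  have hb : BddBelow {x : ℝ | ∃ w' : GNN.Walk p q, WalkIn c w' ∧ wlen (fun _ => (1:ℝ)) w' = x} := by
    refine ⟨0, ?_⟩
    rintro x ⟨w', -, rfl⟩
    rw [wlen_one]
    positivity
  have := csInf_le hb ⟨w, hw, rfl⟩
  rwa [wlen_one] at this

lemma l1_le_length {p q : ℕ × ℕ} (w : GNN.Walk p q) :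
    (p.1 - q.1) + (q.1 - p.1) + ((p.2 - q.2) + (q.2 - p.2)) ≤ w.length := by
  induction w with
  | nil => simp
  | @cons u v x h w ih =>
    rw [Walk.length_cons]
    rw [gnn_adj, nline_adj, nline_adj] at h
    omega

lemma sq_shortcut_long {m : ℕ} (hm : 1 ≤ m) {p q : ℕ × ℕ} (σ : GNN.Walk p q)
    (hσ : IsShortcut (fun _ => (1 : ℝ)) (sq m) σ) :
    (m : ℝ) ≤ wlen (fun _ => (1 : ℝ)) σ := by
  obtain ⟨-, hp, hq, hlt⟩ := hσ
  rw [wlen_one] at hlt ⊢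
  have h2 := l1_le_length σ
  by_cases hsmall : (p.1 - q.1) + (q.1 - p.1) < m ∧ (p.2 - q.2) + (q.2 - p.2) < m
  · obtain ⟨w, hw, hlen⟩ := reach hm p q hp hq hsmall.1 hsmall.2
    have h1 := cdist_le w hw
    have h3 : (σ.length : ℝ) < (w.length : ℝ) := lt_of_lt_of_le hlt h1
    have h4 : σ.length < w.length := by exact_mod_cast h3
    omega
  · have : m ≤ σ.length := by omega
    exact_mod_cast this


/-- The Cartesian product graph `G = ℕ □ ℕ` with all edges of length
`1` is not `(k, k/2)`-path-chordal for any `k ≥ 5`: for each `n ≥ k` the geodesic square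
`C_n` through `(1,1), (n,1), (n,n), (1,n)` is a cycle of length `4n - 4 ≥ k` all of
whose shortcuts have length at least `n - 1 > k/2`. -/
theorem natGrid_not_pathChordal (k : ℝ) (hk : 5 ≤ k) :
    ¬ PathChordalLe GNN (fun _ => (1 : ℝ)) k (k / 2) ∧
    ∀ n : ℕ, k ≤ (n : ℝ) →
      ∃ c : GNN.Walk (1, 1) (1, 1), c.IsCycle ∧
        wlen (fun _ => (1 : ℝ)) c = 4 * (n : ℝ) - 4 ∧ k ≤ wlen (fun _ => (1 : ℝ)) c ∧
        (n, 1) ∈ c.support ∧ (n, n) ∈ c.support ∧ (1, n) ∈ c.support ∧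
        (∀ v ∈ c.support, (v.1 = 1 ∨ v.1 = n ∨ v.2 = 1 ∨ v.2 = n) ∧
          1 ≤ v.1 ∧ v.1 ≤ n ∧ 1 ≤ v.2 ∧ v.2 ≤ n) ∧
        k / 2 < (n : ℝ) - 1 ∧
        ∀ (p q : ℕ × ℕ) (σ : GNN.Walk p q), IsShortcut (fun _ => (1 : ℝ)) c σ →
          (n : ℝ) - 1 ≤ wlen (fun _ => (1 : ℝ)) σ := by
  have key : ∀ n : ℕ, k ≤ (n : ℝ) →
      ∃ c : GNN.Walk (1, 1) (1, 1), c.IsCycle ∧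
        wlen (fun _ => (1 : ℝ)) c = 4 * (n : ℝ) - 4 ∧ k ≤ wlen (fun _ => (1 : ℝ)) c ∧
        (n, 1) ∈ c.support ∧ (n, n) ∈ c.support ∧ (1, n) ∈ c.support ∧
        (∀ v ∈ c.support, (v.1 = 1 ∨ v.1 = n ∨ v.2 = 1 ∨ v.2 = n) ∧
          1 ≤ v.1 ∧ v.1 ≤ n ∧ 1 ≤ v.2 ∧ v.2 ≤ n) ∧
        k / 2 < (n : ℝ) - 1 ∧
        ∀ (p q : ℕ × ℕ) (σ : GNN.Walk p q), IsShortcut (fun _ => (1 : ℝ)) c σ →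
          (n : ℝ) - 1 ≤ wlen (fun _ => (1 : ℝ)) σ := by
    intro n hn
    have hn5 : 5 ≤ n := by
      have h5 : (5 : ℝ) ≤ (n : ℝ) := le_trans hk hn
      exact_mod_cast h5
    obtain ⟨m, rfl⟩ : ∃ m, n = 1 + m := ⟨n - 1, by omega⟩
    have hm : 1 ≤ m := by omega
    have hm4 : (4 : ℝ) ≤ (m : ℝ) := by exact_mod_cast (by omega : 4 ≤ m)
    have hnr : ((1 + m : ℕ) : ℝ) = 1 + (m : ℝ) := by push_cast; ring
    refine ⟨sq m, sq_isCycle hm, ?_, ?_, ?_, ?_, ?_, ?_, ?_, ?_⟩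
    · rw [wlen_one, sq_length]; push_cast; ring
    · rw [wlen_one, sq_length]
      rw [hnr] at hn
      push_cast
      linarith
    · rw [mem_sq_support hm]; exact ⟨by simp, by simp, by simp, by simp, by simp⟩
    · rw [mem_sq_support hm]; exact ⟨by simp, by simp, by simp, by simp, by simp⟩
    · rw [mem_sq_support hm]; exact ⟨by simp, by simp, by simp, by simp, by simp⟩
    · intro v hv
      rw [mem_sq_support hm] at hv
      exact hv
    · rw [hnr] at hn
      linarith
    · intro p q σ hσ
      have h := sq_shortcut_long hm σ hσ
      rw [hnr]
      linarith
  refine ⟨?_, key⟩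
  intro hPC
  obtain ⟨c, hcyc, _, hklen, _, _, _, _, hk2, hshort⟩ := key ⌈k⌉₊ (Nat.le_ceil k)
  obtain ⟨p, q, σ, hσ, hσlen⟩ := hPC _ c hcyc hklen
  have h := hshort p q σ hσ
  linarith

end Chordality
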